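/- For any unit-norm sequence F in C^M with N vectors, FP(F) ≥ N²/M, with equality if and only if FF* = (N/M)I (i.e., F is a unit norm tight frame). -/

import Mathlib

noncomputable section
open scoped InnerProductSpace
open Complex Finset

def col {M N : ℕ} (F : Matrix (Fin M) (Fin N) ℂ) (n : Fin N) : EuclideanSpace ℂ (Fin M) :=
  (WithLp.equiv 2 (Fin M → ℂ)).symm (fun m => F m n)

/-- The frame potential. -/
def FP {M N : ℕ} (F : Matrix (Fin M) (Fin N) ℂ) : ℝ :=
  ∑ n : Fin N, ∑ n' : Fin N, ‖⟪col F n, col F n'⟫_ℂ‖ ^ 2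

lemma sum_normSq_eq_trace {k : ℕ} (B : Matrix (Fin k) (Fin k) ℂ) (hB : B.conjTranspose = B) :
    ((∑ i, ∑ j, Complex.normSq (B i j) : ℝ) : ℂ) = (B * B).trace := by
  rw [Matrix.trace]
  push_cast
  simp only [Matrix.diag_apply, Matrix.mul_apply]
  refine Finset.sum_congr rfl fun i _ => Finset.sum_congr rfl fun j _ => ?_
  have h : B j i = starRingEnd ℂ (B i j) := by
    conv_lhs => rw [← hB]
    simp [Matrix.conjTranspose_apply]
  rw [h, Complex.mul_conj]

theorem frame_potential_ge_and_untf_iff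
    (M N : ℕ) (hM : 0 < M) (F : Matrix (Fin M) (Fin N) ℂ)
    (hunit : ∀ n : Fin N, ‖col F n‖ = 1) :
    (N : ℝ) ^ 2 / M ≤ FP F ∧
    (FP F = (N : ℝ) ^ 2 / M ↔
      F * F.conjTranspose = ((N : ℂ) / M) • (1 : Matrix (Fin M) (Fin M) ℂ)) := by
  classical
  have hMR : (M : ℝ) ≠ 0 := Nat.cast_ne_zero.mpr hM.ne'
  set G := F * F.conjTranspose with hGdef
  set c : ℂ := (N : ℂ) / (M : ℂ) with hcdef
  have hcconj : starRingEnd ℂ c = c := by simp [hcdef, map_div₀]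
  -- inner products are entries of Fᴴ F
  have hinner : ∀ n n', ⟪col F n, col F n'⟫_ℂ = (F.conjTranspose * F) n n' := by
    intro n n'
    simp [col, PiLp.inner_apply, Matrix.mul_apply, Matrix.conjTranspose_apply,
      RCLike.inner_apply]
    exact Finset.sum_congr rfl fun _ _ => mul_comm _ _
  have hFP : FP F = ∑ n, ∑ n', Complex.normSq ((F.conjTranspose * F) n n') := by
    unfold FP
    simp [hinner, Complex.sq_norm]
  have hA : (F.conjTranspose * F).conjTranspose = F.conjTranspose * F := by
    simp [Matrix.conjTranspose_mul]
  have hGH : G.conjTranspose = G := by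
    simp [hGdef, Matrix.conjTranspose_mul]
  have htrace : ((F.conjTranspose * F) * (F.conjTranspose * F)).trace = (G * G).trace := by
    rw [Matrix.mul_assoc, Matrix.trace_mul_comm, hGdef]
    simp only [Matrix.mul_assoc]
  have hS2 : FP F = ∑ i, ∑ j, Complex.normSq (G i j) := by
    have h1 := sum_normSq_eq_trace _ hA
    have h2 := sum_normSq_eq_trace _ hGH
    have : ((FP F : ℝ) : ℂ) = ((∑ i, ∑ j, Complex.normSq (G i j) : ℝ) : ℂ) := by
      rw [hFP, h1, htrace, h2]
    exact_mod_cast this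
  -- trace of G is N
  have hcolnorm : ∀ n, ∑ i, Complex.normSq (F i n) = 1 := by
    intro n
    have h := hunit n
    rw [EuclideanSpace.norm_eq] at h
    have h2 : ∑ i, ‖col F n i‖ ^ 2 = 1 := by
      have := Real.sqrt_eq_one.mp h
      exact this
    calc ∑ i, Complex.normSq (F i n) = ∑ i, ‖col F n i‖ ^ 2 := by
          refine Finset.sum_congr rfl fun i _ => ?_
          rw [Complex.sq_norm]; rfl
      _ = 1 := h2
  have htr : ∑ i, G i i = (N : ℂ) := by
    have : ∀ i, G i i = ((∑ k, Complex.normSq (F i k) : ℝ) : ℂ) := by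
      intro i
      simp only [hGdef, Matrix.mul_apply, Matrix.conjTranspose_apply]
      push_cast
      refine Finset.sum_congr rfl fun k _ => ?_
      exact (Complex.mul_conj (F i k))
    rw [Finset.sum_congr rfl fun i _ => this i]
    rw [← Complex.ofReal_sum]
    rw [Finset.sum_comm]
    simp [hcolnorm]
  -- the difference matrix
  set H := G - c • (1 : Matrix (Fin M) (Fin M) ℂ) with hHdef
  have hentry : ∀ i j, Complex.normSq (H i j) =
      Complex.normSq (G i j) +
        (if i = j then Complex.normSq c - 2 * (G i j * starRingEnd ℂ c).re else 0) := by
    intro i j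
    by_cases h : i = j
    · subst h
      have hd : H i i = G i i - c := by
        simp [hHdef, Matrix.sub_apply, Matrix.smul_apply, Matrix.one_apply_eq]
      rw [hd, Complex.normSq_sub, if_pos rfl]
      ring
    · simp [hHdef, Matrix.sub_apply, Matrix.smul_apply, Matrix.one_apply_ne h, h]
  have hre : ∑ i, (G i i * starRingEnd ℂ c).re = (N : ℝ) ^ 2 / M := by
    have : ∑ i, (G i i * starRingEnd ℂ c).re = ((∑ i, G i i) * starRingEnd ℂ c).re := by
      rw [Finset.sum_mul, Complex.re_sum]
    rw [this, htr, hcconj, hcdef]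
    have : (N : ℂ) * ((N : ℂ) / (M : ℂ)) = (((N : ℝ) ^ 2 / M : ℝ) : ℂ) := by
      push_cast; ring
    rw [this, Complex.ofReal_re]
  have hnsqc : Complex.normSq c = (N : ℝ) ^ 2 / (M : ℝ) ^ 2 := by
    rw [hcdef, Complex.normSq_div]
    simp [Complex.normSq_natCast]
    ring
  have hT : ∑ i, ∑ j, Complex.normSq (H i j) =
      (∑ i, ∑ j, Complex.normSq (G i j)) - (N : ℝ) ^ 2 / M := by
    have step : ∀ i : Fin M, ∑ j, Complex.normSq (H i j) =
        (∑ j, Complex.normSq (G i j)) +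
          (Complex.normSq c - 2 * (G i i * starRingEnd ℂ c).re) := by
      intro i
      rw [Finset.sum_congr rfl fun j _ => hentry i j, Finset.sum_add_distrib,
        Finset.sum_ite_eq univ i (fun j => Complex.normSq c - 2 * (G i j * starRingEnd ℂ c).re)]
      rw [if_pos (Finset.mem_univ i)]
    rw [Finset.sum_congr rfl fun i _ => step i, Finset.sum_add_distrib, Finset.sum_sub_distrib]
    rw [← Finset.mul_sum, hre, Finset.sum_const, Finset.card_univ, Fintype.card_fin,
      nsmul_eq_mul, hnsqc]
    have harith : (M : ℝ) * ((N : ℝ) ^ 2 / (M : ℝ) ^ 2) - 2 * ((N : ℝ) ^ 2 / M)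
        = -((N : ℝ) ^ 2 / M) := by
      field_simp
      ring
    linarith [harith]
  have hTnn : 0 ≤ ∑ i, ∑ j, Complex.normSq (H i j) :=
    Finset.sum_nonneg fun i _ => Finset.sum_nonneg fun j _ => Complex.normSq_nonneg _
  constructor
  · rw [hS2]
    linarith [hT, hTnn]
  constructor
  · intro heq
    have hzero : ∑ i, ∑ j, Complex.normSq (H i j) = 0 := by
      rw [hT, ← hS2, heq]
      ring
    have hij : ∀ i ∈ (Finset.univ : Finset (Fin M)), ∀ j ∈ (Finset.univ : Finset (Fin M)),
        Complex.normSq (H i j) = 0 := by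
      have h1 := (Finset.sum_eq_zero_iff_of_nonneg
        (fun i _ => Finset.sum_nonneg fun j _ => Complex.normSq_nonneg (H i j))).mp hzero
      intro i hi j hj
      exact (Finset.sum_eq_zero_iff_of_nonneg
        (fun j _ => Complex.normSq_nonneg (H i j))).mp (h1 i hi) j hj
    have hHzero : H = 0 := by
      ext i j
      exact Complex.normSq_eq_zero.mp (hij i (Finset.mem_univ i) j (Finset.mem_univ j))
    exact sub_eq_zero.mp hHzero
  · intro heq
    have hHzero : H = 0 := by
      rw [hHdef, heq]
      simp
    rw [hS2]
    have : ∑ i, ∑ j, Complex.normSq (H i j) = 0 := by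
      simp [hHzero]
    linarith [hT, this]
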